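/- arXiv:2311.07112 — 5 statements merged into one kernel-verified Lean document; each statement's English description precedes it below -/
import Mathlib

section
/- Let A be an additive group with subgroups B and C such that B ∩ C = {0} and A = B + C. Define a∘a₁ = b + a₁ + c where a = b + c with b ∈ B, c ∈ C. Then (A,+,∘) is a skew brace, and (A,∘) is isomorphic to the direct product B × C^op. -/
/-- Exact factorizations give skew braces: if `A = B + C` is an exact factorization
of the additive group `A`, then `a ∘ a₁ = b + a₁ + c` (where `a = b + c`, `b ∈ B`,
`c ∈ C`) defines a group structure on `A` making `(A,+,∘)` a skew brace, and
`(A,∘)` is isomorphic to `B × Cᵒᵖ` (encoded by the multiplicative bijection `f`). -/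
theorem exact_factorization_skewBrace (A : Type*) [AddGroup A]
    (B C : AddSubgroup A)
    (hfact : ∀ a : A, ∃! p : B × C, a = (p.1 : A) + (p.2 : A))
    (circ : A → A → A)
    (hcirc : ∀ (b : B) (c : C) (a₁ : A), circ ((b : A) + (c : A)) a₁ = (b : A) + a₁ + (c : A)) :
    (∀ x y z : A, circ (circ x y) z = circ x (circ y z)) ∧
    (∀ x : A, circ 0 x = x) ∧ (∀ x : A, circ x 0 = x) ∧
    (∀ x : A, ∃ y : A, circ x y = 0 ∧ circ y x = 0) ∧
    (∀ a b c : A, circ a (b + c) = circ a b + -a + circ a c) ∧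
    (∃ f : B × C → A, Function.Bijective f ∧
      ∀ (b₁ b₂ : B) (c₁ c₂ : C),
        circ (f (b₁, c₁)) (f (b₂, c₂)) = f (b₁ + b₂, c₂ + c₁)) := by
  refine ⟨?_, ?_, ?_, ?_, ?_, ?_⟩
  · intro x y z
    obtain ⟨⟨b₁, c₁⟩, hx, -⟩ := hfact x
    obtain ⟨⟨b₂, c₂⟩, hy, -⟩ := hfact y
    subst hx; subst hy
    rw [hcirc b₂ c₂ z, hcirc b₁ c₁, hcirc b₁ c₁,
      show (b₁ : A) + ((b₂ : A) + (c₂ : A)) + (c₁ : A)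
        = ((b₁ + b₂ : B) : A) + ((c₂ + c₁ : C) : A) by push_cast; simp [add_assoc, neg_add_rev],
      hcirc]
    push_cast; simp [add_assoc, neg_add_rev]
  · intro x
    have h := hcirc 0 0 x
    simpa using h
  · intro x
    obtain ⟨⟨b, c⟩, hx, -⟩ := hfact x
    subst hx
    rw [hcirc, add_zero]
  · intro x
    obtain ⟨⟨b, c⟩, hx, -⟩ := hfact x
    subst hx
    refine ⟨((-b : B) : A) + ((-c : C) : A), ?_, ?_⟩
    · rw [hcirc]; push_cast; simp [add_assoc, neg_add_rev]
    · rw [hcirc]; push_cast; simp [add_assoc, neg_add_rev]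
  · intro a x y
    obtain ⟨⟨b, c⟩, ha, -⟩ := hfact a
    subst ha
    rw [hcirc, hcirc, hcirc]
    simp [add_assoc, neg_add_rev]
  · refine ⟨fun q => (q.1 : A) + (q.2 : A), ⟨?_, ?_⟩, ?_⟩
    · intro p q h
      obtain ⟨r, -, hu⟩ := hfact ((p.1 : A) + (p.2 : A))
      rw [hu p rfl, hu q h]
    · intro a
      obtain ⟨p, hp, -⟩ := hfact a
      exact ⟨p, hp.symm⟩
    · intro b₁ b₂ c₁ c₂
      rw [hcirc]
      push_cast; simp [add_assoc, neg_add_rev]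
end

section
/- Let A be a skew brace. The socle Soc(A) = ker(λ) ∩ Z(A,+) is an ideal of A, where λ : (A,∘) → Aut(A,+) is the map a ↦ λ_a with λ_a(b) = -a + a∘b, and Z(A,+) is the center of the additive group. -/
def IsSkewBrace (A : Type*) [AddGroup A] [Group A] : Prop :=
  ∀ a b c : A, a * (b + c) = a * b - a + a * c

/-- An ideal of a skew brace: a normal subgroup for both operations, stable
under all the maps λₐ : x ↦ -a + a∘x. -/
def IsIdeal (A : Type*) [AddGroup A] [Group A] (I : Set A) : Prop :=
  (∃ S : Subgroup A, S.Normal ∧ (S : Set A) = I) ∧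
  (∃ T : AddSubgroup A, T.Normal ∧ (T : Set A) = I) ∧
  (∀ a x : A, x ∈ I → -a + a * x ∈ I)

section Aux

variable {A : Type*} [AddGroup A] [Group A] (h : IsSkewBrace A)

include h

lemma sb_mul_zero (a : A) : a * 0 = a := by
  have h0 := h a 0 0
  rw [add_zero, sub_eq_add_neg, add_assoc] at h0
  nth_rewrite 1 [← add_zero (a * 0)] at h0
  have := add_left_cancel h0
  symm at this
  rwa [neg_add_eq_zero, eq_comm] at this

lemma sb_one_eq_zero : (1 : A) = 0 := by
  have h0 := h 1 0 0
  rw [one_mul, one_mul, add_zero, sub_eq_add_neg, add_zero, zero_add] at h0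
  rwa [← neg_eq_zero, eq_comm]

lemma sb_hom (a b c : A) : -(a * b) + (a * b) * c = -a + a * (-b + b * c) := by
  have hneg : a * (-b) = a + -(a * b) + a := by
    have h0 := h a b (-b)
    rw [add_neg_cancel, sb_mul_zero h, sub_eq_add_neg] at h0
    -- h0 : a = a * b + -a + a * -b
    have h1 : a * (-b) = -(a * b + -a) + a := eq_neg_add_iff_add_eq.mpr h0.symm
    rw [h1, neg_add_rev, neg_neg]
  rw [h a (-b) (b * c), hneg, mul_assoc]
  simp [sub_eq_add_neg, add_assoc]

end Aux

/-- The socle ker λ ∩ Z(A,+) is an ideal. -/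
theorem socle_isIdeal (A : Type*) [AddGroup A] [Group A] (h : IsSkewBrace A) :
    IsIdeal A {a : A | (∀ b : A, -a + a * b = b) ∧ (∀ b : A, a + b = b + a)} := by
  set Soc : Set A := {a : A | (∀ b : A, -a + a * b = b) ∧ (∀ b : A, a + b = b + a)} with hSoc
  -- if λ_a = id then a * b = a + b
  have hmul : ∀ a b : A, (∀ c : A, -a + a * c = c) → a * b = a + b := by
    intro a b ha
    have := congrArg (a + ·) (ha b)
    simpa [add_neg_cancel_left] using this
  -- λ_g is additive
  have ladd : ∀ g x y : A, -g + g * (x + y) = (-g + g * x) + (-g + g * y) := by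
    intro g x y
    rw [h g x y]
    simp [sub_eq_add_neg, add_assoc]
  -- λ_g ∘ λ_{g⁻¹} = id
  have linv : ∀ g b : A, -g + g * (-g⁻¹ + g⁻¹ * b) = b := by
    intro g b
    rw [← sb_hom h, mul_inv_cancel, one_mul, sb_one_eq_zero h, neg_zero, zero_add]
  -- λ_g of a central element is central
  have hcent : ∀ g a : A, (∀ b : A, a + b = b + a) → ∀ b : A,
      (-g + g * a) + b = b + (-g + g * a) := by
    intro g a ha b
    have hb : b = -g + g * (-g⁻¹ + g⁻¹ * b) := (linv g b).symm
    rw [hb, ← ladd, ← ladd, ha]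
  -- a⁻¹ = -a for a in the kernel of λ
  have hinv : ∀ a : A, (∀ c : A, -a + a * c = c) → a⁻¹ = -a := by
    intro a ha
    have : a * a⁻¹ = a + a⁻¹ := hmul a a⁻¹ ha
    rw [mul_inv_cancel, sb_one_eq_zero h] at this
    exact eq_neg_of_add_eq_zero_right this.symm
  -- conjugation: g * a * g⁻¹ = -g + g * a  =  λ_g a, for a ∈ Soc
  have hconj_eq : ∀ g a : A, a ∈ Soc → g * a * g⁻¹ = -g + g * a := by
    intro g a ha
    have h1 : a * g⁻¹ = a + g⁻¹ := hmul a g⁻¹ ha.1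
    rw [mul_assoc, h1, h g a g⁻¹, mul_inv_cancel, sb_one_eq_zero h, sub_eq_add_neg,
      add_zero]
    -- goal : g * a + -g = -g + g * a
    have hc := hcent g a ha.2 (-g)
    -- hc : (-g + g * a) + -g = -g + (-g + g * a)
    have : g * a + -g = g + ((-g + g * a) + -g) := by
      rw [← add_assoc, add_neg_cancel_left]
    rw [this, hc, add_neg_cancel_left]
  -- membership of the conjugate
  have hconj : ∀ g a : A, a ∈ Soc → g * a * g⁻¹ ∈ Soc := by
    intro g a ha
    constructor
    · intro b
      rw [sb_hom h (g * a) g⁻¹ b, sb_hom h g a (-g⁻¹ + g⁻¹ * b), ha.1, linv]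
    · intro b
      rw [hconj_eq g a ha]
      exact hcent g a ha.2 b
  have hone : (1 : A) ∈ Soc := by
    constructor
    · intro b
      rw [one_mul, sb_one_eq_zero h, neg_zero, zero_add]
    · intro b
      rw [sb_one_eq_zero h, zero_add, add_zero]
  have hmulmem : ∀ a b : A, a ∈ Soc → b ∈ Soc → a * b ∈ Soc := by
    intro a b ha hb
    constructor
    · intro c
      rw [sb_hom h a b c, hb.1, ha.1]
    · intro c
      rw [hmul a b ha.1, add_assoc, hb.2, ← add_assoc, ha.2, add_assoc]
  have hinvmem : ∀ a : A, a ∈ Soc → a⁻¹ ∈ Soc := by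
    intro a ha
    constructor
    · intro b
      have := sb_hom h a⁻¹ a b
      rw [inv_mul_cancel, one_mul, sb_one_eq_zero h, neg_zero, zero_add, ha.1] at this
      exact this.symm
    · intro b
      rw [hinv a ha.1]
      have h3 := congrArg (fun z => -a + z + -a) (ha.2 b)
      rw [neg_add_cancel_left, add_assoc, add_assoc, add_neg_cancel, add_zero] at h3
      exact h3.symm
  refine ⟨⟨⟨⟨⟨Soc, ?_⟩, ?_⟩, ?_⟩, ⟨?_⟩, rfl⟩, ⟨⟨⟨⟨⟨Soc, ?_⟩, ?_⟩, ?_⟩, ⟨?_⟩, rfl⟩, ?_⟩⟩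
  · intro a b ha hb
    exact hmulmem a b ha hb
  · exact hone
  · intro a ha
    exact hinvmem a ha
  · intro n hn g
    exact hconj g n hn
  · intro a b ha hb
    rw [← hmul a b ha.1]
    exact hmulmem a b ha hb
  · rw [← sb_one_eq_zero h]
    exact hone
  · intro a ha
    rw [← hinv a ha.1]
    exact hinvmem a ha
  · intro n hn g
    have : g + n + -g = n := by rw [← hn.2 g, add_assoc, add_neg_cancel, add_zero]
    rw [this]
    exact hn
  · intro g a ha
    rw [← hconj_eq g a ha]
    exact hconj g a ha
end

section
/- Every radical ring R gives rise to a two-sided skew brace of abelian type (R,+,∘) with x∘y = x + xy + y; conversely, if (A,+,∘) is a two-sided skew brace with abelian additive group, then defining xy = -x + x∘y - y makes (A,+,·) a radical ring. These constructions are mutually inverse. -/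
/-- Rump's correspondence between radical rings and two-sided skew braces of
abelian type. (1) If R is a radical ring then (R,+,∘) with x∘y = x + xy + y is a
two-sided skew brace of abelian type, and -x + x∘y - y recovers the ring product.
(2) Conversely, a two-sided skew brace of abelian type A becomes a radical ring
with product xy = -x + x∘y - y, whose circle operation recovers ∘. -/
theorem radical_ring_two_sided_correspondence :
    (∀ (R : Type) [inst : NonUnitalRing R],
      (∀ x : R, ∃ y : R, x + x * y + y = 0 ∧ y + y * x + x = 0) →
      ∀ circ : R → R → R, (∀ x y : R, circ x y = x + x * y + y) →
        (∀ x y z : R, circ (circ x y) z = circ x (circ y z)) ∧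
        (∀ x : R, circ 0 x = x ∧ circ x 0 = x) ∧
        (∀ x : R, ∃ y : R, circ x y = 0 ∧ circ y x = 0) ∧
        (∀ a b c : R, circ a (b + c) = circ a b - a + circ a c) ∧
        (∀ a b c : R, circ (a + b) c = circ a c - c + circ b c) ∧
        (∀ x y : R, -x + circ x y - y = x * y)) ∧
    (∀ (A : Type) [instA : AddCommGroup A] [instM : Group A],
      IsSkewBrace A →
      (∀ a b c : A, (a + b) * c = a * c - c + b * c) →
      ∀ mul : A → A → A, (∀ x y : A, mul x y = -x + x * y - y) →
        (∀ x y z : A, mul (mul x y) z = mul x (mul y z)) ∧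
        (∀ x y z : A, mul x (y + z) = mul x y + mul x z) ∧
        (∀ x y z : A, mul (x + y) z = mul x z + mul y z) ∧
        (∀ x y : A, x + mul x y + y = x * y)) := by
  constructor
  · intro R _ hinv circ hc
    refine ⟨?_, ?_, ?_, ?_, ?_, ?_⟩
    · intro x y z
      simp only [hc]
      simp only [mul_add, add_mul, mul_assoc]
      abel
    · intro x
      constructor <;> simp [hc]
    · intro x
      obtain ⟨y, h1, h2⟩ := hinv x
      exact ⟨y, by rw [hc]; exact h1, by rw [hc]; exact h2⟩
    · intro a b c
      simp only [hc, mul_add]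
      abel
    · intro a b c
      simp only [hc, add_mul]
      abel
    · intro x y
      rw [hc]
      abel
  · intro A _ _ hsb hts mul hm
    have hrec : ∀ x y : A, x + mul x y + y = x * y := by
      intro x y; rw [hm]; abel
    have ldist : ∀ x y z : A, mul x (y + z) = mul x y + mul x z := by
      intro x y z
      simp only [hm, hsb x y z]
      abel
    have rdist : ∀ x y z : A, mul (x + y) z = mul x z + mul y z := by
      intro x y z
      simp only [hm, hts x y z]
      abel
    refine ⟨?_, ldist, rdist, hrec⟩
    intro x y z
    have E1 : x * (y * z) =
        mul x (mul y z) + (x + mul x y + mul x z + y + mul y z + z) := by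
      calc x * (y * z) = x + mul x (y * z) + (y * z) := (hrec _ _).symm
        _ = x + mul x ((y + mul y z) + z) + (y + mul y z + z) := by
            rw [hrec y z]
        _ = x + (mul x y + mul x (mul y z) + mul x z) + (y + mul y z + z) := by
            rw [ldist, ldist]
        _ = mul x (mul y z) + (x + mul x y + mul x z + y + mul y z + z) := by
            abel
    have E2 : (x * y) * z =
        mul (mul x y) z + (x + mul x y + mul x z + y + mul y z + z) := by
      calc (x * y) * z = (x * y) + mul (x * y) z + z := (hrec _ _).symm
        _ = (x + mul x y + y) + mul ((x + mul x y) + y) z + z := by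
            rw [hrec x y]
        _ = (x + mul x y + y) + (mul x z + mul (mul x y) z + mul y z) + z := by
            rw [rdist, rdist]
        _ = mul (mul x y) z + (x + mul x y + mul x z + y + mul y z + z) := by
            abel
    have h : mul (mul x y) z + (x + mul x y + mul x z + y + mul y z + z) =
        mul x (mul y z) + (x + mul x y + mul x z + y + mul y z + z) := by
      rw [← E1, ← E2, mul_assoc]
    exact add_right_cancel h
end

section
/- Let A be a skew brace and r_A(x,y) = (-x + x∘y, (-x + x∘y)'∘x∘y) the associated solution. Then r_A² = id if and only if the additive group (A,+) is abelian. -/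
/-- The solution associated with a skew brace is involutive iff the additive
group is abelian. -/
theorem skewBrace_solution_involutive_iff (A : Type*) [AddGroup A] [Group A]
    (h : IsSkewBrace A)
    (rA : A × A → A × A)
    (hrA : ∀ x y : A, rA (x, y) = (-x + x * y, (-x + x * y)⁻¹ * x * y)) :
    rA ∘ rA = id ↔ ∀ a b : A, a + b = b + a := by
  constructor
  · intro hid a b
    have h1 := congrFun hid (a, a⁻¹ * b)
    rw [Function.comp_apply, hrA, hrA] at h1
    have h2 := congrArg Prod.fst h1
    simp only [id_eq] at h2
    have hab : a * (a⁻¹ * b) = b := by group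
    rw [hab] at h2
    -- h2 : -(-a + b) + (-a + b) * ((-a + b)⁻¹ * a * (a⁻¹ * b)) = a
    have hmul : (-a + b) * ((-a + b)⁻¹ * a * (a⁻¹ * b)) = b := by group
    rw [hmul, neg_add_rev, neg_neg] at h2
    -- h2 : -b + a + b = a
    have : b + (-b + a + b) = b + a := by rw [h2]
    rw [← add_assoc, ← add_assoc, add_neg_cancel, zero_add] at this
    exact this
  · intro hc
    funext p
    obtain ⟨x, y⟩ := p
    rw [Function.comp_apply, hrA, hrA]
    have hmul : (-x + x * y) * ((-x + x * y)⁻¹ * x * y) = x * y := by group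
    rw [hmul]
    have hfst : -(-x + x * y) + x * y = x := by
      rw [neg_add_rev, neg_neg, add_assoc, hc x (x * y), neg_add_cancel_left]
    rw [hfst]
    simp only [id_eq, Prod.mk.injEq, true_and]
    group
end

section
/- Let X be a group and r : X² → X² defined by r(x,y) = (x²y, y⁻¹x⁻¹y). Then r satisfies the Yang–Baxter equation r₁r₂r₁ = r₂r₁r₂ on X³. -/
/-- Wada's solution r(x,y) = (x²y, y⁻¹x⁻¹y) on a group satisfies the
Yang–Baxter equation. -/
theorem wada_yang_baxter (X : Type*) [Group X]
    (r : X × X → X × X) (hr : ∀ x y : X, r (x, y) = (x ^ 2 * y, y⁻¹ * x⁻¹ * y))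
    (r₁ r₂ : X × X × X → X × X × X)
    (hr₁ : ∀ x y z : X, r₁ (x, y, z) = ((r (x, y)).1, (r (x, y)).2, z))
    (hr₂ : ∀ x y z : X, r₂ (x, y, z) = (x, r (y, z))) :
    r₁ ∘ r₂ ∘ r₁ = r₂ ∘ r₁ ∘ r₂ := by
  funext ⟨x, y, z⟩
  simp only [Function.comp, hr₁, hr₂, hr]
  refine Prod.ext ?_ (Prod.ext ?_ ?_) <;> simp [pow_two, mul_assoc]
end
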